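/- Let 0 < q < 1, Δ = (q + q⁻¹)/2, and z ∈ ℂ with z ≠ 0 such that all relevant denominators are nonzero. With Ξ_m(z) as above, for every m, 1 − (1/(2Δ))[Ξ_m(z) + Ξ_m(z)^{-1}] = ((1−q²)/(1+q²)) · [1/(1 + q^{2m+1} z) − 1/(1 + q^{2m−1} z)]. -/

import Mathlib

/-- The Bethe ansatz energy summand identity:
`1 − (1/(2Δ))[Ξ_m(z) + Ξ_m(z)⁻¹]` telescopes. -/
theorem bethe_energy_summand
    (q : ℝ) (hq0 : 0 < q) (hq1 : q < 1)
    (Δ : ℝ) (hΔ : Δ = (q + q⁻¹) / 2)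
    (w z : ℂ) (hw : w ≠ 0) (hz : z ≠ 0) (hwz : w ^ 2 = z)
    (m : ℝ)
    (Xi : ℂ)
    (hXi : Xi =
      (w * (q ^ (m - 1/2) : ℝ) + w⁻¹ * (q ^ (-m + 1/2) : ℝ))
        / (w * (q ^ (m + 1/2) : ℝ) + w⁻¹ * (q ^ (-m - 1/2) : ℝ)))
    (hden : w * (q ^ (m + 1/2) : ℝ) + w⁻¹ * (q ^ (-m - 1/2) : ℝ) ≠ 0)
    (hXi0 : Xi ≠ 0)
    (hd1 : 1 + (q ^ (2*m + 1) : ℝ) * z ≠ 0)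
    (hd2 : 1 + (q ^ (2*m - 1) : ℝ) * z ≠ 0) :
    1 - (1 / (2 * (Δ:ℂ))) * (Xi + Xi⁻¹)
      = ((1 - q^2) / (1 + q^2) : ℝ)
        * (1 / (1 + (q ^ (2*m + 1) : ℝ) * z) - 1 / (1 + (q ^ (2*m - 1) : ℝ) * z)) := by
  set u : ℝ := q ^ (m : ℝ) with hu
  set s : ℝ := q ^ ((1:ℝ)/2) with hs
  have hupos : 0 < u := Real.rpow_pos_of_pos hq0 _
  have hspos : 0 < s := Real.rpow_pos_of_pos hq0 _
  have hqs : q = s ^ 2 := by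
    rw [hs, ← Real.rpow_natCast (q ^ ((1:ℝ)/2)) 2, ← Real.rpow_mul hq0.le]
    norm_num
  have e2m : q ^ (2*m : ℝ) = u ^ 2 := by
    rw [show (2*m : ℝ) = m * (2:ℕ) by push_cast; ring, Real.rpow_mul hq0.le,
      Real.rpow_natCast, hu]
  have e1 : q ^ (m - 1/2 : ℝ) = u / s := by
    rw [Real.rpow_sub hq0, hu, hs]
  have e2 : q ^ (-m + 1/2 : ℝ) = s / u := by
    rw [show (-m + 1/2 : ℝ) = 1/2 - m by ring, Real.rpow_sub hq0, hu, hs]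
  have e3 : q ^ (m + 1/2 : ℝ) = u * s := by
    rw [Real.rpow_add hq0, hu, hs]
  have e4 : q ^ (-m - 1/2 : ℝ) = (u * s)⁻¹ := by
    rw [show (-m - 1/2 : ℝ) = -(m + 1/2) by ring, Real.rpow_neg hq0.le,
      Real.rpow_add hq0, hu, hs]
  have e5 : q ^ (2*m + 1 : ℝ) = u ^ 2 * s ^ 2 := by
    rw [Real.rpow_add hq0, e2m, Real.rpow_one, hqs]
  have e6 : q ^ (2*m - 1 : ℝ) = u ^ 2 / s ^ 2 := by
    rw [Real.rpow_sub hq0, e2m, Real.rpow_one, hqs]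
  rw [e3, e4] at hden
  rw [hXi, e1, e2, e3, e4] at hXi0 ⊢
  rw [e5] at hd1 ⊢
  rw [e6] at hd2 ⊢
  rw [hΔ, hqs]
  have hU : ((u : ℝ) : ℂ) ≠ 0 := by exact_mod_cast hupos.ne'
  have hS : ((s : ℝ) : ℂ) ≠ 0 := by exact_mod_cast hspos.ne'
  push_cast at hden hd1 hd2 ⊢
  rw [← hwz] at hd1 hd2 ⊢
  set U : ℂ := ((u : ℝ) : ℂ)
  set S : ℂ := ((s : ℝ) : ℂ)
  -- rewrite Xi
  have hA : w * (U / S) + w⁻¹ * (S / U) = (w^2 * U^2 + S^2) / (S * (w * U)) := by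
    field_simp
  have hB : w * (U * S) + w⁻¹ * (U * S)⁻¹ = (w^2 * U^2 * S^2 + 1) / (S * (w * U)) := by
    field_simp
  have hd1' : w^2 * U^2 * S^2 + 1 ≠ 0 := by
    intro h
    apply hd1
    linear_combination h
  have hd2' : w^2 * U^2 + S^2 ≠ 0 := by
    intro h
    apply hd2
    have hS2 : S^2 ≠ 0 := pow_ne_zero _ hS
    field_simp
    linear_combination h
  have hq2 : S^2 * S^2 + 1 ≠ 0 := by
    have hpos : (0:ℝ) < s^2 * s^2 + 1 := by positivity
    have h2 : ((s^2 * s^2 + 1 : ℝ) : ℂ) ≠ 0 := by exact_mod_cast hpos.ne'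
    simpa using h2
  have hXiv : (w * (U / S) + w⁻¹ * (S / U)) / (w * (U * S) + w⁻¹ * (U * S)⁻¹)
      = (w^2 * U^2 + S^2) / (w^2 * U^2 * S^2 + 1) := by
    have hc : S * (w * U) ≠ 0 := mul_ne_zero hS (mul_ne_zero hw hU)
    rw [hA, hB, div_div_div_cancel_right₀ hc]
  rw [hXiv, inv_div]
  have h3 : 1 + U^2/S^2*w^2 = (S^2 + U^2*w^2)/S^2 := by
    field_simp
  have h4 : 2*((S^2+(S^2)⁻¹)/2) = (S^2*S^2+1)/S^2 := by
    field_simp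
  rw [h3, h4]
  have hN : S^2 + U^2*w^2 ≠ 0 := fun h => hd2' (by linear_combination h)
  have hD : 1 + U^2*S^2*w^2 ≠ 0 := hd1
  rw [one_div ((S^2*S^2+1)/S^2), inv_div, one_div ((S^2+U^2*w^2)/S^2), inv_div]
  have hq2b : 1 + (S^2)^2 ≠ 0 := fun h => hq2 (by linear_combination h)
  rw [div_add_div _ _ hd1' hd2', div_sub_div _ _ hD hN, div_mul_div_comm, div_mul_div_comm,
    sub_eq_iff_eq_add,
    div_add_div _ _ (mul_ne_zero hq2b (mul_ne_zero hD hN)) (mul_ne_zero hq2 (mul_ne_zero hd1' hd2')),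
    eq_comm, div_eq_iff (mul_ne_zero (mul_ne_zero hq2b (mul_ne_zero hD hN)) (mul_ne_zero hq2 (mul_ne_zero hd1' hd2')))]
  ring
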